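/- arXiv:0710.1530 — 5 statements merged into one kernel-verified Lean document; each statement's English description precedes it below -/
import Mathlib

section
/- Let A, L, P be n×n complex matrices and assume that L and P are normal. Then (a) AL = PA if and only if AL* = P*A (where * denotes conjugate transpose); and (b) if in addition L and P are nonsingular, then AL = PA if and only if A(L⁻¹)* = (P⁻¹)*A. -/
open Matrix

private lemma eq_zero_of_trace_mul_conjTranspose {m : ℕ}
    {B : Matrix (Fin m) (Fin m) ℂ} (h : trace (B * Bᴴ) = 0) : B = 0 := by
  have h' : ∑ i, ∑ j, Complex.normSq (B i j) = 0 := by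
    have : trace (B * Bᴴ) = ((∑ i, ∑ j, Complex.normSq (B i j) : ℝ) : ℂ) := by
      simp [trace, Matrix.mul_apply, Matrix.diag, conjTranspose_apply,
        Complex.mul_conj]
    rw [this] at h
    exact_mod_cast h
  ext i j
  have := (Finset.sum_eq_zero_iff_of_nonneg (fun i _ => Finset.sum_nonneg
    (fun j _ => Complex.normSq_nonneg _))).mp h' i (Finset.mem_univ i)
  have := (Finset.sum_eq_zero_iff_of_nonneg (fun j _ =>
    Complex.normSq_nonneg _)).mp this j (Finset.mem_univ j)
  simpa using Complex.normSq_eq_zero.mp this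

private lemma fp_key {m : ℕ} (A L P : Matrix (Fin m) (Fin m) ℂ)
    (hL : Lᴴ * L = L * Lᴴ) (hP : Pᴴ * P = P * Pᴴ)
    (h : A * L = P * A) : A * Lᴴ = Pᴴ * A := by
  have h1 : Lᴴ * Aᴴ = Aᴴ * Pᴴ := by
    rw [← conjTranspose_mul, h, conjTranspose_mul]
  set B := A * Lᴴ - Pᴴ * A with hB
  have expand : B * Bᴴ =
      A * Lᴴ * L * Aᴴ - A * Lᴴ * Aᴴ * P - Pᴴ * A * L * Aᴴ + Pᴴ * A * Aᴴ * P := by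
    simp only [hB, conjTranspose_sub, conjTranspose_mul, conjTranspose_conjTranspose]
    noncomm_ring
  set t := trace (A * Aᴴ * Pᴴ * P) with ht
  have e1 : trace (A * Lᴴ * L * Aᴴ) = t := by
    have : A * Lᴴ * L * Aᴴ = P * (A * Aᴴ * Pᴴ) := by
      calc A * Lᴴ * L * Aᴴ = A * (Lᴴ * L) * Aᴴ := by noncomm_ring
        _ = A * (L * Lᴴ) * Aᴴ := by rw [hL]
        _ = (A * L) * (Lᴴ * Aᴴ) := by noncomm_ring
        _ = (P * A) * (Aᴴ * Pᴴ) := by rw [h, h1]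
        _ = P * (A * Aᴴ * Pᴴ) := by noncomm_ring
    rw [this, trace_mul_comm, ht]
  have e2 : trace (A * Lᴴ * Aᴴ * P) = t := by
    have : A * Lᴴ * Aᴴ * P = A * Aᴴ * Pᴴ * P := by
      calc A * Lᴴ * Aᴴ * P = A * (Lᴴ * Aᴴ) * P := by noncomm_ring
        _ = A * (Aᴴ * Pᴴ) * P := by rw [h1]
        _ = A * Aᴴ * Pᴴ * P := by noncomm_ring
    rw [this, ht]
  have e3 : trace (Pᴴ * A * L * Aᴴ) = t := by
    have : Pᴴ * A * L * Aᴴ = (Pᴴ * P) * (A * Aᴴ) := by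
      calc Pᴴ * A * L * Aᴴ = Pᴴ * (A * L) * Aᴴ := by noncomm_ring
        _ = Pᴴ * (P * A) * Aᴴ := by rw [h]
        _ = (Pᴴ * P) * (A * Aᴴ) := by noncomm_ring
    rw [this, trace_mul_comm, ht]
    congr 1 <;> noncomm_ring
  have e4 : trace (Pᴴ * A * Aᴴ * P) = t := by
    have : Pᴴ * A * Aᴴ * P = Pᴴ * (A * Aᴴ * P) := by noncomm_ring
    rw [this, trace_mul_comm]
    have : A * Aᴴ * P * Pᴴ = (A * Aᴴ) * (P * Pᴴ) := by noncomm_ring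
    rw [this, ← hP, ht]
    congr 1 <;> noncomm_ring
  have htr : trace (B * Bᴴ) = 0 := by
    rw [expand, trace_add, trace_sub, trace_sub, e1, e2, e3, e4]
    ring
  have := eq_zero_of_trace_mul_conjTranspose htr
  have := sub_eq_zero.mp this
  exact this

/-- Fuglede–Putnam type lemma: if `L` and `P` are normal, then
(a) `A * L = P * A ↔ A * Lᴴ = Pᴴ * A`, and
(b) if `L` and `P` are nonsingular, `A * L = P * A ↔ A * (L⁻¹)ᴴ = (P⁻¹)ᴴ * A`. -/
theorem stmt_0 {n : ℕ} (A L P : Matrix (Fin n) (Fin n) ℂ)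
    (hL : Lᴴ * L = L * Lᴴ) (hP : Pᴴ * P = P * Pᴴ) :
    (A * L = P * A ↔ A * Lᴴ = Pᴴ * A) ∧
    (IsUnit L.det → IsUnit P.det →
      (A * L = P * A ↔ A * (L⁻¹)ᴴ = (P⁻¹)ᴴ * A)) := by
  have hLH : (Lᴴ)ᴴ * Lᴴ = Lᴴ * (Lᴴ)ᴴ := by
    rw [conjTranspose_conjTranspose]; exact hL.symm
  have hPH : (Pᴴ)ᴴ * Pᴴ = Pᴴ * (Pᴴ)ᴴ := by
    rw [conjTranspose_conjTranspose]; exact hP.symm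
  have part_a : A * L = P * A ↔ A * Lᴴ = Pᴴ * A := by
    constructor
    · exact fp_key A L P hL hP
    · intro h
      have := fp_key A Lᴴ Pᴴ hLH hPH h
      rwa [conjTranspose_conjTranspose, conjTranspose_conjTranspose] at this
  refine ⟨part_a, fun hLd hPd => ?_⟩
  have hLinv : A * L = P * A ↔ A * L⁻¹ = P⁻¹ * A := by
    constructor
    · intro h
      calc A * L⁻¹ = P⁻¹ * (P * A) * L⁻¹ := by
            rw [Matrix.nonsing_inv_mul_cancel_left P A hPd]
        _ = P⁻¹ * (A * L) * L⁻¹ := by rw [h]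
        _ = P⁻¹ * A := by
            rw [← Matrix.mul_assoc P⁻¹ A L,
              Matrix.mul_nonsing_inv_cancel_right L (P⁻¹ * A) hLd]
    · intro h
      calc A * L = P * (P⁻¹ * A) * L := by
            rw [Matrix.mul_nonsing_inv_cancel_left P A hPd]
        _ = P * (A * L⁻¹) * L := by rw [h]
        _ = P * A := by
            rw [← Matrix.mul_assoc P A L⁻¹,
              Matrix.nonsing_inv_mul_cancel_right L (P * A) hLd]
  have hLinvN : (L⁻¹)ᴴ * L⁻¹ = L⁻¹ * (L⁻¹)ᴴ := by
    rw [conjTranspose_nonsing_inv, ← Matrix.mul_inv_rev, ← Matrix.mul_inv_rev, hL]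
  have hPinvN : (P⁻¹)ᴴ * P⁻¹ = P⁻¹ * (P⁻¹)ᴴ := by
    rw [conjTranspose_nonsing_inv, ← Matrix.mul_inv_rev, ← Matrix.mul_inv_rev, hP]
  have part_a' : A * L⁻¹ = P⁻¹ * A ↔ A * (L⁻¹)ᴴ = (P⁻¹)ᴴ * A := by
    constructor
    · exact fp_key A L⁻¹ P⁻¹ hLinvN hPinvN
    · intro h
      have hLH' : ((L⁻¹)ᴴ)ᴴ * (L⁻¹)ᴴ = (L⁻¹)ᴴ * ((L⁻¹)ᴴ)ᴴ := by
        rw [conjTranspose_conjTranspose]; exact hLinvN.symm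
      have hPH' : ((P⁻¹)ᴴ)ᴴ * (P⁻¹)ᴴ = (P⁻¹)ᴴ * ((P⁻¹)ᴴ)ᴴ := by
        rw [conjTranspose_conjTranspose]; exact hPinvN.symm
      have := fp_key A (L⁻¹)ᴴ (P⁻¹)ᴴ hLH' hPH' h
      rwa [conjTranspose_conjTranspose, conjTranspose_conjTranspose] at this
  exact hLinv.trans part_a'
end

section
/- Let A, B, S be nonsingular n×n complex matrices and let S = WQ be a right polar decomposition of S (W unitary, Q positive definite Hermitian). Then A and B are unitarily congruent if and only if there is a nonsingular matrix S such that A = SBSᵀ and A⁻* = SB⁻*Sᵀ. In fact, if A = SBSᵀ and A⁻* = SB⁻*Sᵀ with S = WQ, then A = WBWᵀ and A⁻* = WB⁻*Wᵀ. -/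
open Matrix
open scoped ComplexOrder

section
open scoped MatrixOrder

noncomputable def Matrix.PosSemidef.sqrt {n : ℕ} {X : Matrix (Fin n) (Fin n) ℂ}
    (_h : X.PosSemidef) : Matrix (Fin n) (Fin n) ℂ := CFC.sqrt X

lemma Matrix.PosSemidef.sqrt_mul_self {n : ℕ} {X : Matrix (Fin n) (Fin n) ℂ}
    (h : X.PosSemidef) : h.sqrt * h.sqrt = X :=
  CFC.sqrt_mul_sqrt_self X (Matrix.nonneg_iff_posSemidef.2 h)

lemma Matrix.PosSemidef.posSemidef_sqrt {n : ℕ} {X : Matrix (Fin n) (Fin n) ℂ}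
    (h : X.PosSemidef) : h.sqrt.PosSemidef :=
  Matrix.nonneg_iff_posSemidef.1 (CFC.sqrt_nonneg X)

end

private lemma ct_t {n : ℕ} (M : Matrix (Fin n) (Fin n) ℂ) : (Mᵀ)ᴴ = (Mᴴ)ᵀ := rfl

private lemma tr_herm {n : ℕ} (Z : Matrix (Fin n) (Fin n) ℂ) :
    (Zᴴ * Z).trace = ((∑ j, ∑ i, Complex.normSq (Z i j) : ℝ) : ℂ) := by
  simp only [Matrix.trace, Matrix.diag, Matrix.mul_apply, Matrix.conjTranspose_apply]
  push_cast
  refine Finset.sum_congr rfl fun j _ => Finset.sum_congr rfl fun i _ => ?_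
  rw [Complex.normSq_eq_conj_mul_self]
  rfl

private lemma eq_zero_of_trace {n : ℕ} (Z M : Matrix (Fin n) (Fin n) ℂ)
    (h : (Mᴴ * M).trace + (Zᴴ * Z).trace = 0) : Z = 0 := by
  rw [tr_herm, tr_herm, ← Complex.ofReal_add] at h
  have h' : (∑ j, ∑ i, Complex.normSq (M i j)) + (∑ j, ∑ i, Complex.normSq (Z i j)) = 0 := by
    exact_mod_cast h
  have hM : 0 ≤ ∑ j, ∑ i, Complex.normSq (M i j) :=
    Finset.sum_nonneg fun j _ => Finset.sum_nonneg fun i _ => Complex.normSq_nonneg _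
  have hZn : ∀ j ∈ Finset.univ, 0 ≤ ∑ i, Complex.normSq (Z i j) :=
    fun j _ => Finset.sum_nonneg fun i _ => Complex.normSq_nonneg _
  have hZ : (∑ j, ∑ i, Complex.normSq (Z i j)) = 0 :=
    le_antisymm (by linarith) (Finset.sum_nonneg hZn)
  ext i j
  have h1 := (Finset.sum_eq_zero_iff_of_nonneg hZn).1 hZ j (Finset.mem_univ j)
  have h2 := (Finset.sum_eq_zero_iff_of_nonneg
    (fun i _ => Complex.normSq_nonneg (Z i j))).1 h1 i (Finset.mem_univ i)
  simpa [Complex.normSq_eq_zero] using h2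

/-- If `Q` is positive definite and `Q² X (Q²)ᵀ = X`, then `Q X Qᵀ = X`. -/
private lemma key {n : ℕ} {Q X : Matrix (Fin n) (Fin n) ℂ} (hQ : Q.PosDef)
    (h : Q * Q * X * (Q * Q)ᵀ = X) : Q * X * Qᵀ = X := by
  set R := hQ.posSemidef.sqrt with hRdef
  have hRR : R * R = Q := hQ.posSemidef.sqrt_mul_self
  have hRh : Rᴴ = R := hQ.posSemidef.posSemidef_sqrt.isHermitian
  set Z := Q * X * Qᵀ - X with hZ
  have h2 : Q * Z * Qᵀ = -Z := by
    have e : Q * (Q * X * Qᵀ - X) * Qᵀ = Q * Q * X * (Qᵀ * Qᵀ) - Q * X * Qᵀ := by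
      simp only [Matrix.mul_sub, Matrix.sub_mul, Matrix.mul_assoc]
    rw [hZ, e, ← Matrix.transpose_mul, h]
    abel
  set M := R * Z * Rᵀ with hM
  have hMH : Mᴴ = Rᵀ * Zᴴ * R := by
    rw [hM, Matrix.conjTranspose_mul, Matrix.conjTranspose_mul, ct_t, hRh, Matrix.mul_assoc]
  have hMMe : Mᴴ * M = Rᵀ * (Zᴴ * (Q * (Z * Rᵀ))) := by
    rw [hMH, hM, ← hRR]
    simp only [Matrix.mul_assoc]
  have hMM : (Mᴴ * M).trace = -((Zᴴ * Z).trace) := by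
    rw [hMMe, Matrix.trace_mul_comm]
    have e2 : Zᴴ * (Q * (Z * Rᵀ)) * Rᵀ = Zᴴ * (Q * Z * Qᵀ) := by
      rw [← hRR, Matrix.transpose_mul]
      simp only [Matrix.mul_assoc]
    rw [e2, h2, Matrix.mul_neg, Matrix.trace_neg]
  have hZ0 : Z = 0 := eq_zero_of_trace Z M (by rw [hMM]; ring)
  have := sub_eq_zero.mp hZ0
  exact this

private lemma posDefOf {n : ℕ} {X : Matrix (Fin n) (Fin n) ℂ} (h : X.PosSemidef)
    (hd : IsUnit X.det) : X.PosDef := by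
  exact h.posDef_iff_isUnit.2 ((Matrix.isUnit_iff_isUnit_det _).2 hd)

private lemma polar_step {n : ℕ} {A B S W Q : Matrix (Fin n) (Fin n) ℂ}
    (hB : IsUnit B.det) (hS : IsUnit S.det)
    (hW : Wᴴ * W = 1) (hQ : Q.PosDef) (hWQ : S = W * Q)
    (h1 : A = S * B * Sᵀ) (h2 : (A⁻¹)ᴴ = S * (B⁻¹)ᴴ * Sᵀ) :
    A = W * B * Wᵀ ∧ (A⁻¹)ᴴ = W * (B⁻¹)ᴴ * Wᵀ := by
  have hQh : Qᴴ = Q := hQ.isHermitian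
  have hQd : IsUnit Q.det := hQ.det_pos.ne'.isUnit
  have hQdT : IsUnit Qᵀ.det := by rw [Matrix.det_transpose]; exact hQd
  have hSH : Sᴴ = Q * Wᴴ := by rw [hWQ, Matrix.conjTranspose_mul, hQh]
  have hP : Sᴴ * S = Q * Q := by
    rw [hSH, hWQ]
    calc Q * Wᴴ * (W * Q) = Q * ((Wᴴ * W) * Q) := by simp only [Matrix.mul_assoc]
      _ = Q * Q := by rw [hW, Matrix.one_mul]
  have hSdH : IsUnit Sᴴ.det := by rw [Matrix.det_conjTranspose]; exact hS.star
  have hSdT : IsUnit Sᵀ.det := by rw [Matrix.det_transpose]; exact hS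
  have hSdTH : IsUnit (Sᵀᴴ).det := by rw [Matrix.det_conjTranspose]; exact hSdT.star
  have hAinv : A⁻¹ = Sᵀ⁻¹ * (B⁻¹ * S⁻¹) := by
    rw [h1, Matrix.mul_inv_rev, Matrix.mul_inv_rev]
  have hAinvH : (A⁻¹)ᴴ = Sᴴ⁻¹ * ((B⁻¹)ᴴ * Sᵀᴴ⁻¹) := by
    rw [hAinv]
    simp only [Matrix.conjTranspose_mul, Matrix.conjTranspose_nonsing_inv, Matrix.mul_assoc]
  have hmain : Q * Q * (B⁻¹)ᴴ * (Q * Q)ᵀ = (B⁻¹)ᴴ := by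
    have e : S * (B⁻¹)ᴴ * Sᵀ = Sᴴ⁻¹ * ((B⁻¹)ᴴ * Sᵀᴴ⁻¹) := by rw [← h2, hAinvH]
    have e2 : Sᴴ * (S * (B⁻¹)ᴴ * Sᵀ) * Sᵀᴴ = (B⁻¹)ᴴ := by
      rw [e]
      calc Sᴴ * (Sᴴ⁻¹ * ((B⁻¹)ᴴ * Sᵀᴴ⁻¹)) * Sᵀᴴ
          = Sᴴ * (Sᴴ⁻¹ * ((B⁻¹)ᴴ * (Sᵀᴴ⁻¹ * Sᵀᴴ))) := by simp only [Matrix.mul_assoc]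
        _ = (B⁻¹)ᴴ := by
            rw [Matrix.nonsing_inv_mul _ hSdTH, Matrix.mul_one,
              Matrix.mul_nonsing_inv_cancel_left _ _ hSdH]
    calc Q * Q * (B⁻¹)ᴴ * (Q * Q)ᵀ = (Sᴴ * S) * (B⁻¹)ᴴ * (Sᴴ * S)ᵀ := by rw [hP]
      _ = Sᴴ * (S * (B⁻¹)ᴴ * Sᵀ) * Sᵀᴴ := by
          rw [Matrix.transpose_mul, ← ct_t]
          simp only [Matrix.mul_assoc]
      _ = (B⁻¹)ᴴ := e2
  have hkey : Q * (B⁻¹)ᴴ * Qᵀ = (B⁻¹)ᴴ := key hQ hmain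
  have hQtH : (Qᵀ)ᴴ = Qᵀ := by rw [ct_t, hQh]
  have hB' : Qᵀ * (B⁻¹ * Q) = B⁻¹ := by
    have h3 := congrArg Matrix.conjTranspose hkey
    simp only [Matrix.conjTranspose_mul, hQtH, hQh, Matrix.conjTranspose_conjTranspose,
      Matrix.mul_assoc] at h3
    exact h3
  have hQB : Q * B * Qᵀ = B := by
    have h3 : (Qᵀ * (B⁻¹ * Q))⁻¹ = B⁻¹⁻¹ := by rw [hB']
    rw [Matrix.mul_inv_rev, Matrix.mul_inv_rev, Matrix.nonsing_inv_nonsing_inv _ hB] at h3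
    have h4 : Q * (Q⁻¹ * B * Qᵀ⁻¹) * Qᵀ = B := by
      calc Q * (Q⁻¹ * B * Qᵀ⁻¹) * Qᵀ = Q * (Q⁻¹ * (B * (Qᵀ⁻¹ * Qᵀ))) := by
            simp only [Matrix.mul_assoc]
        _ = B := by
            rw [Matrix.nonsing_inv_mul _ hQdT, Matrix.mul_one,
              Matrix.mul_nonsing_inv_cancel_left _ _ hQd]
    rw [h3] at h4
    exact h4
  constructor
  · rw [h1, hWQ, Matrix.transpose_mul]
    calc W * Q * B * (Qᵀ * Wᵀ) = W * (Q * B * Qᵀ) * Wᵀ := by simp only [Matrix.mul_assoc]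
      _ = W * B * Wᵀ := by rw [hQB]
  · rw [h2, hWQ, Matrix.transpose_mul]
    calc W * Q * (B⁻¹)ᴴ * (Qᵀ * Wᵀ) = W * (Q * (B⁻¹)ᴴ * Qᵀ) * Wᵀ := by
          simp only [Matrix.mul_assoc]
      _ = W * (B⁻¹)ᴴ * Wᵀ := by rw [hkey]

/-- Criterion for unitary congruence: nonsingular `A` and `B` are unitarily congruent iff
the pairs `(A, A⁻*)` and `(B, B⁻*)` are congruent; moreover, if the congruence is achieved
by `S` with right polar decomposition `S = WQ`, then it is achieved by the unitary `W`. -/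
theorem stmt_8 {n : ℕ} (A B S W Q : Matrix (Fin n) (Fin n) ℂ)
    (hA : IsUnit A.det) (hB : IsUnit B.det) (hS : IsUnit S.det)
    (hW : Wᴴ * W = 1) (hQ : Q.PosDef) (hWQ : S = W * Q) :
    ((∃ U : Matrix (Fin n) (Fin n) ℂ, Uᴴ * U = 1 ∧ A = U * B * Uᵀ) ↔
      ∃ T : Matrix (Fin n) (Fin n) ℂ, IsUnit T.det ∧
        A = T * B * Tᵀ ∧ (A⁻¹)ᴴ = T * (B⁻¹)ᴴ * Tᵀ) ∧
    ((A = S * B * Sᵀ ∧ (A⁻¹)ᴴ = S * (B⁻¹)ᴴ * Sᵀ) →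
      (A = W * B * Wᵀ ∧ (A⁻¹)ᴴ = W * (B⁻¹)ᴴ * Wᵀ)) := by
  constructor
  · constructor
    · rintro ⟨U, hU, hAU⟩
      have hUd : IsUnit U.det := by
        have hdet : Uᴴ.det * U.det = 1 := by rw [← Matrix.det_mul, hU, Matrix.det_one]
        exact IsUnit.of_mul_eq_one _ (by rw [mul_comm]; exact hdet)
      have hUdT : IsUnit Uᵀ.det := by rw [Matrix.det_transpose]; exact hUd
      have hUinv : U⁻¹ = Uᴴ := Matrix.inv_eq_left_inv hU
      refine ⟨U, hUd, hAU, ?_⟩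
      have hAinv : A⁻¹ = Uᵀ⁻¹ * (B⁻¹ * U⁻¹) := by
        rw [hAU, Matrix.mul_inv_rev, Matrix.mul_inv_rev]
      rw [hAinv]
      simp only [Matrix.conjTranspose_mul, Matrix.conjTranspose_nonsing_inv]
      have e1 : (U⁻¹)ᴴ = U := by rw [hUinv, Matrix.conjTranspose_conjTranspose]
      have e2 : ((Uᵀ)ᴴ)⁻¹ = Uᵀ := by
        rw [ct_t, ← hUinv, ← Matrix.transpose_nonsing_inv,
          Matrix.nonsing_inv_nonsing_inv _ hUd]
      rw [Matrix.conjTranspose_nonsing_inv] at e1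
      -- after simp the goal should be (Uᴴ)⁻¹ * ((B⁻¹)ᴴ * ((Uᵀ)ᴴ)⁻¹) = U * (B⁻¹)ᴴ * Uᵀ
      rw [e1, e2, Matrix.mul_assoc]
    · rintro ⟨T, hT, h1, h2⟩
      have hTTsd : (Tᴴ * T).PosSemidef := Matrix.posSemidef_conjTranspose_mul_self T
      have hTTd : IsUnit (Tᴴ * T).det := by
        rw [Matrix.det_mul, Matrix.det_conjTranspose]
        exact (hT.star).mul hT
      have hTTpd : (Tᴴ * T).PosDef := posDefOf hTTsd hTTd
      set Q' := hTTsd.sqrt with hQ'def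
      have hQ'Q' : Q' * Q' = Tᴴ * T := hTTsd.sqrt_mul_self
      have hQ'h : Q'ᴴ = Q' := hTTsd.posSemidef_sqrt.isHermitian
      have hQ'd : IsUnit Q'.det := by
        rw [isUnit_iff_ne_zero]
        intro hc
        rw [isUnit_iff_ne_zero, ← hQ'Q', Matrix.det_mul, hc, mul_zero] at hTTd
        exact hTTd rfl
      have hQ'pd : Q'.PosDef := posDefOf hTTsd.posSemidef_sqrt hQ'd
      set W' := T * Q'⁻¹ with hW'def
      have hW' : W'ᴴ * W' = 1 := by
        rw [hW'def, Matrix.conjTranspose_mul, Matrix.conjTranspose_nonsing_inv, hQ'h]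
        calc Q'⁻¹ * Tᴴ * (T * Q'⁻¹) = Q'⁻¹ * ((Tᴴ * T) * Q'⁻¹) := by
              simp only [Matrix.mul_assoc]
          _ = Q'⁻¹ * (Q' * (Q' * Q'⁻¹)) := by rw [← hQ'Q']; simp only [Matrix.mul_assoc]
          _ = 1 := by
              rw [Matrix.mul_nonsing_inv _ hQ'd, Matrix.mul_one,
                Matrix.nonsing_inv_mul _ hQ'd]
      have hWQ' : T = W' * Q' := by
        rw [hW'def, Matrix.nonsing_inv_mul_cancel_right _ _ hQ'd]
      obtain ⟨hh1, _⟩ := polar_step hB hT hW' hQ'pd hWQ' h1 h2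
      exact ⟨W', hW', hh1⟩
  · rintro ⟨h1, h2⟩
    exact polar_step hB hS hW hQ hWQ h1 h2
end

section
/- Let A be an n×n complex matrix. Let P = (AA*)^{1/2} and Q = (A*A)^{1/2} be the unique positive semidefinite Hermitian square roots of AA* and A*A, and let S = (A + Aᵀ)/2 and C = (A − Aᵀ)/2 be the symmetric and skew-symmetric parts of A. The following are equivalent: (a) S·conj(C) = C·conj(S); (b) A is conjugate normal, i.e., A*A = conj(AA*); (c) Q = conj(P); (d) PA = A·conj(P). -/
open Matrix
open scoped ComplexOrder

namespace CN

set_option linter.unusedSectionVars false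

noncomputable def cm {m : Type*} (M : Matrix m m ℂ) : Matrix m m ℂ := M.map (starRingEnd ℂ)

variable {m : Type*} [Fintype m] [DecidableEq m]

lemma cm_cm (M : Matrix m m ℂ) : cm (cm M) = M := by
  simp [cm, Matrix.map_map, Function.comp_def]

lemma cm_mul (M N : Matrix m m ℂ) : cm (M * N) = cm M * cm N :=
  Matrix.map_mul

lemma cm_sub (M N : Matrix m m ℂ) : cm (M - N) = cm M - cm N := by
  ext i j; simp [cm]

lemma cm_add (M N : Matrix m m ℂ) : cm (M + N) = cm M + cm N := by
  ext i j; simp [cm]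

lemma cm_smul (c : ℂ) (M : Matrix m m ℂ) : cm (c • M) = (starRingEnd ℂ c) • cm M := by
  ext i j; simp [cm]

lemma cm_ct (M : Matrix m m ℂ) : cm Mᴴ = Mᵀ := by
  ext i j; simp [cm, Matrix.conjTranspose_apply]

lemma ct_cm (M : Matrix m m ℂ) : (cm M)ᴴ = Mᵀ := by
  ext i j; simp [cm, Matrix.conjTranspose_apply]

lemma cm_inj {M N : Matrix m m ℂ} (h : cm M = cm N) : M = N := by
  have := congrArg cm h; rwa [cm_cm, cm_cm] at this

lemma trace_cm (M : Matrix m m ℂ) : Matrix.trace (cm M) = star (Matrix.trace M) := by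
  simp [cm, Matrix.trace, Matrix.diag, Matrix.map_apply]

lemma trace_zero_of_psdish (D : Matrix m m ℂ) (h : Matrix.trace (Dᴴ * D) = 0) : D = 0 := by
  rw [Matrix.trace] at h
  have hnn : ∀ j, 0 ≤ Matrix.diag (Dᴴ * D) j := by
    intro j
    have : Matrix.diag (Dᴴ * D) j = dotProduct (star (fun k => D k j)) (fun k => D k j) := by
      simp [Matrix.diag, Matrix.mul_apply, dotProduct, Matrix.conjTranspose_apply]
    rw [this]
    exact dotProduct_star_self_nonneg _
  have hz := (Finset.sum_eq_zero_iff_of_nonneg (fun j _ => hnn j)).mp h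
  ext i j
  have := hz j (Finset.mem_univ j)
  rw [show Matrix.diag (Dᴴ * D) j = dotProduct (star (fun k => D k j)) (fun k => D k j) by
    simp [Matrix.diag, Matrix.mul_apply, dotProduct, Matrix.conjTranspose_apply]] at this
  have := dotProduct_star_self_eq_zero.mp this
  exact congrFun this i

end CN

namespace CN
variable {m : Type*} [Fintype m] [DecidableEq m]

lemma commute_of_commute_sq {R X : Matrix m m ℂ} (hR : R.PosSemidef)
    (h : X * (R * R) = (R * R) * X) : X * R = R * X := by
  have hH := hR.1
  set U : Matrix m m ℂ := (Matrix.IsHermitian.eigenvectorUnitary hH : Matrix m m ℂ) with hUdef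
  set d : m → ℝ := hH.eigenvalues with hddef
  set Dg : Matrix m m ℂ := Matrix.diagonal (fun i => (d i : ℂ)) with hDgdef
  have hspec : R = U * Dg * star U := by
    have := hH.spectral_theorem
    convert this using 2
    simp [Unitary.conjStarAlgAut_apply, hUdef, hDgdef, hddef, Function.comp_def]
  have hU1 : star U * U = 1 := Matrix.mem_unitaryGroup_iff'.mp (Matrix.IsHermitian.eigenvectorUnitary hH).2
  have hU2 : U * star U = 1 := Matrix.mem_unitaryGroup_iff.mp (Matrix.IsHermitian.eigenvectorUnitary hH).2
  set Y : Matrix m m ℂ := star U * X * U with hYdef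
  have hXY : U * Y * star U = X := by
    rw [hYdef]
    calc U * (star U * X * U) * star U = (U * star U) * X * (U * star U) := by
          noncomm_ring
      _ = X := by rw [hU2]; simp
  have hRR : R * R = U * (Dg * Dg) * star U := by
    rw [hspec]
    calc (U * Dg * star U) * (U * Dg * star U) = U * Dg * (star U * U) * Dg * star U := by
          noncomm_ring
      _ = U * (Dg * Dg) * star U := by rw [hU1]; noncomm_ring
  have hYD2 : Y * (Dg * Dg) = (Dg * Dg) * Y := by
    have h1 : star U * (X * (R * R)) * U = Y * (Dg * Dg) := by
      rw [hRR, hYdef]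
      calc star U * (X * (U * (Dg * Dg) * star U)) * U
          = (star U * X * U) * (Dg * Dg) * (star U * U) := by noncomm_ring
        _ = (star U * X * U) * (Dg * Dg) := by rw [hU1]; simp
    have h2 : star U * ((R * R) * X) * U = (Dg * Dg) * Y := by
      rw [hRR, hYdef]
      calc star U * ((U * (Dg * Dg) * star U) * X) * U
          = (star U * U) * (Dg * Dg) * (star U * X * U) := by noncomm_ring
        _ = (Dg * Dg) * (star U * X * U) := by rw [hU1]; simp
    rw [← h1, ← h2, h]
  have hYD : Y * Dg = Dg * Y := by
    ext i j
    have hij := congrFun (congrFun hYD2 i) j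
    rw [hDgdef] at hij ⊢
    rw [Matrix.diagonal_mul_diagonal] at hij
    rw [Matrix.mul_diagonal, Matrix.diagonal_mul] at hij ⊢
    rcases eq_or_ne (Y i j) 0 with h0 | h0
    · simp [h0]
    · have hdd : (d j : ℂ) * (d j : ℂ) = (d i : ℂ) * (d i : ℂ) :=
        mul_left_cancel₀ h0 (by linear_combination hij)
      have hde : (d j : ℂ) = (d i : ℂ) := by
        have hdr : d j * d j = d i * d i := by exact_mod_cast hdd
        have hj : 0 ≤ d j := hR.eigenvalues_nonneg j
        have hi : 0 ≤ d i := hR.eigenvalues_nonneg i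
        have : d j = d i := by nlinarith
        exact_mod_cast this
      rw [hde]; ring
  calc X * R = (U * Y * star U) * (U * Dg * star U) := by rw [hXY, ← hspec]
    _ = U * Y * (star U * U) * Dg * star U := by noncomm_ring
    _ = U * (Y * Dg) * star U := by rw [hU1]; noncomm_ring
    _ = U * (Dg * Y) * star U := by rw [hYD]
    _ = (U * Dg * star U) * (U * Y * star U) := by
        rw [show U * Dg * star U * (U * Y * star U) = U * Dg * (star U * U) * Y * star U by noncomm_ring, hU1]
        noncomm_ring
    _ = R * X := by rw [hXY, ← hspec]

end CN

namespace CN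
variable {m : Type*} [Fintype m] [DecidableEq m]

lemma fromBlocks_posSemidef {P Q : Matrix m m ℂ} (hP : P.PosSemidef) (hQ : Q.PosSemidef) :
    (Matrix.fromBlocks P 0 0 Q).PosSemidef := by
  have hsq : ∀ {M : Matrix m m ℂ}, M.PosSemidef → ∃ B : Matrix m m ℂ, M = Bᴴ * B := by
    intro M hM
    open scoped MatrixOrder in
    obtain ⟨X, hX, -, hXe⟩ := CFC.exists_sqrt_of_isSelfAdjoint_of_quasispectrumRestricts
      hM.isHermitian (QuasispectrumRestricts.nnreal_of_nonneg (Matrix.nonneg_iff_posSemidef.mpr hM))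
    exact ⟨X, by rw [← hXe]; exact congrArg (· * X) hX.star_eq.symm⟩
  obtain ⟨B, hB⟩ := hsq hP
  obtain ⟨C, hC⟩ := hsq hQ
  have h : Matrix.fromBlocks P 0 0 Q
      = (Matrix.fromBlocks B 0 0 C)ᴴ * (Matrix.fromBlocks B 0 0 C) := by
    rw [Matrix.fromBlocks_conjTranspose, Matrix.fromBlocks_multiply]
    simp [hB, hC]
  rw [h]; exact Matrix.posSemidef_conjTranspose_mul_self _

lemma polar_comm {A P Q : Matrix m m ℂ}
    (hP : P.PosSemidef) (hPA : P * P = A * Aᴴ)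
    (hQ : Q.PosSemidef) (hQA : Q * Q = Aᴴ * A) : P * A = A * Q := by
  set R : Matrix (m ⊕ m) (m ⊕ m) ℂ := Matrix.fromBlocks P 0 0 Q with hRdef
  set X : Matrix (m ⊕ m) (m ⊕ m) ℂ := Matrix.fromBlocks 0 A 0 0 with hXdef
  have hRpsd : R.PosSemidef := fromBlocks_posSemidef hP hQ
  have hRR : R * R = Matrix.fromBlocks (P * P) 0 0 (Q * Q) := by
    rw [hRdef, Matrix.fromBlocks_multiply]; simp
  have hcomm : X * (R * R) = (R * R) * X := by
    rw [hRR, hXdef, Matrix.fromBlocks_multiply, Matrix.fromBlocks_multiply, hPA, hQA]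
    simp [Matrix.mul_assoc]
  have h := commute_of_commute_sq hRpsd hcomm
  have h12 : (X * R).toBlocks₁₂ = (R * X).toBlocks₁₂ := by rw [h]
  rw [hXdef, hRdef, Matrix.fromBlocks_multiply, Matrix.fromBlocks_multiply] at h12
  simpa using h12.symm

end CN


open Matrix
open scoped ComplexOrder

namespace CN
variable {m : Type*} [Fintype m] [DecidableEq m]

lemma cm_def (M : Matrix m m ℂ) : M.map (starRingEnd ℂ) = cm M := rfl

lemma cm_t (M : Matrix m m ℂ) : cm Mᵀ = Mᴴ := rfl

lemma conj_half : (starRingEnd ℂ) (2:ℂ)⁻¹ = (2:ℂ)⁻¹ := by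
  rw [map_inv₀, Complex.conj_ofNat]

end CN

open CN in
/-- Characterizations of conjugate normal matrices: with `P = (AA*)^{1/2}`,
`Q = (A*A)^{1/2}`, `S = (A + Aᵀ)/2`, `C = (A − Aᵀ)/2`, the following are equivalent:
(a) `S·conj(C) = C·conj(S)`; (b) `A*A = conj(AA*)`; (c) `Q = conj(P)`; (d) `PA = A·conj(P)`. -/
theorem stmt_11 {n : ℕ} (A P Q S C : Matrix (Fin n) (Fin n) ℂ)
    (hP : P.PosSemidef) (hPA : P * P = A * Aᴴ)
    (hQ : Q.PosSemidef) (hQA : Q * Q = Aᴴ * A)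
    (hS : S = (2 : ℂ)⁻¹ • (A + Aᵀ)) (hC : C = (2 : ℂ)⁻¹ • (A - Aᵀ)) :
    ((S * C.map (starRingEnd ℂ) = C * S.map (starRingEnd ℂ)) ↔
      (Aᴴ * A = (A * Aᴴ).map (starRingEnd ℂ))) ∧
    ((Aᴴ * A = (A * Aᴴ).map (starRingEnd ℂ)) ↔ Q = P.map (starRingEnd ℂ)) ∧
    ((Aᴴ * A = (A * Aᴴ).map (starRingEnd ℂ)) ↔ P * A = A * P.map (starRingEnd ℂ)) := by
  simp only [cm_def]
  -- key algebraic identity for part (a)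
  have key : S * cm C - C * cm S = (2:ℂ)⁻¹ • (cm (Aᴴ * A) - A * Aᴴ) := by
    subst hS hC
    rw [cm_smul, cm_smul, cm_sub, cm_add, conj_half, cm_t]
    have e1 : cm (Aᴴ * A) = Aᵀ * cm A := by rw [cm_mul, cm_ct]
    have e2 : A * Aᴴ = A * cm Aᵀ := by rw [cm_t]
    rw [e1, e2]
    simp only [Matrix.smul_mul, Matrix.mul_smul, mul_add, add_mul, mul_sub, sub_mul, cm_t]
    module
  -- part (a) ↔ (b)
  have part1 : (S * cm C = C * cm S) ↔ (Aᴴ * A = cm (A * Aᴴ)) := by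
    constructor
    · intro h
      have h0 : cm (Aᴴ * A) - A * Aᴴ = 0 := by
        have := key
        rw [sub_eq_zero.mpr h] at this
        have h2 := this.symm
        rw [smul_eq_zero] at h2
        rcases h2 with h2 | h2
        · norm_num at h2
        · exact h2
      have h1 : cm (Aᴴ * A) = A * Aᴴ := sub_eq_zero.mp h0
      have := congrArg cm h1
      rwa [cm_cm] at this
    · intro hb
      have h1 : cm (Aᴴ * A) = A * Aᴴ := by rw [hb, cm_cm]
      have : S * cm C - C * cm S = 0 := by rw [key, h1, sub_self, smul_zero]
      exact sub_eq_zero.mp this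
  -- part (b) → (c)
  have part2f : (Aᴴ * A = cm (A * Aᴴ)) → Q = cm P := by
    intro hb
    have hcmP : cm P = Pᵀ := by
      have := congrArg cm hP.1
      rw [cm_ct] at this
      exact this.symm
    have hPt : Pᵀ.PosSemidef := hP.transpose
    have hsq : Q ^ 2 = Pᵀ ^ 2 := by
      rw [pow_two, pow_two, hQA, hb, ← hPA, cm_mul, hcmP]
    rw [hcmP]
    open scoped MatrixOrder in
    exact (CFC.sq_eq_sq_iff Q Pᵀ (Matrix.nonneg_iff_posSemidef.mpr hQ)
      (Matrix.nonneg_iff_posSemidef.mpr hPt)).mp hsq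
  have part2 : (Aᴴ * A = cm (A * Aᴴ)) ↔ Q = cm P := by
    refine ⟨part2f, fun hc => ?_⟩
    rw [← hQA, hc, ← cm_mul, hPA]
  refine ⟨part1, part2, ?_⟩
  -- part (b) ↔ (d)
  constructor
  · intro hb
    have hc : Q = cm P := part2f hb
    have := polar_comm hP hPA hQ hQA
    rwa [hc] at this
  · intro hd
    -- derive (P*P)*A = A*cm(P*P)
    have hstep : (A * Aᴴ) * A = A * cm (A * Aᴴ) := by
      have h1 : P * (P * A) = A * (cm P * cm P) := by
        rw [hd]
        calc P * (A * cm P) = (P * A) * cm P := by rw [Matrix.mul_assoc]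
          _ = (A * cm P) * cm P := by rw [hd]
          _ = A * (cm P * cm P) := by rw [Matrix.mul_assoc]
      rw [← cm_mul, hPA] at h1
      rw [← h1, ← Matrix.mul_assoc, hPA]
    set D : Matrix (Fin n) (Fin n) ℂ := Aᴴ * A - cm (A * Aᴴ) with hDdef
    have hAD : A * D = 0 := by
      rw [hDdef, Matrix.mul_sub, sub_eq_zero, ← Matrix.mul_assoc]
      exact hstep
    have hYt : cm (A * Aᴴ) = (A * Aᴴ)ᵀ := by
      have h1 : (A * Aᴴ)ᴴ = A * Aᴴ := by simp
      have := congrArg cm h1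
      rw [cm_ct] at this
      exact this.symm
    have hDH : Dᴴ = D := by
      rw [hDdef]
      rw [Matrix.conjTranspose_sub, ct_cm, Matrix.conjTranspose_mul,
        Matrix.conjTranspose_conjTranspose, hYt]
    have hXD : (Aᴴ * A) * D = 0 := by
      rw [Matrix.mul_assoc, hAD, Matrix.mul_zero]
    have tr1 : Matrix.trace (D * (Aᴴ * A)) = 0 := by
      rw [Matrix.trace_mul_comm, hXD, Matrix.trace_zero]
    have hXX : (Aᴴ * A) * (Aᴴ * A) = (Aᴴ * A) * cm (A * Aᴴ) := by
      have := hXD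
      rw [hDdef, Matrix.mul_sub, sub_eq_zero] at this
      exact this
    have trYY : Matrix.trace (cm (A * Aᴴ) * cm (A * Aᴴ))
        = Matrix.trace ((Aᴴ * A) * (Aᴴ * A)) := by
      rw [← cm_mul, trace_cm]
      have hreal : star (Matrix.trace ((A * Aᴴ) * (A * Aᴴ))) = Matrix.trace ((A * Aᴴ) * (A * Aᴴ)) := by
        rw [← Matrix.trace_conjTranspose, Matrix.conjTranspose_mul]
        congr 1
        simp
      rw [hreal]
      rw [show (A * Aᴴ) * (A * Aᴴ) = A * (Aᴴ * (A * Aᴴ)) by noncomm_ring,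
        Matrix.trace_mul_comm,
        show (Aᴴ * (A * Aᴴ)) * A = (Aᴴ * A) * (Aᴴ * A) by noncomm_ring]
    have tr2 : Matrix.trace (D * cm (A * Aᴴ)) = 0 := by
      rw [hDdef, Matrix.sub_mul, Matrix.trace_sub, ← hXX, trYY, sub_self]
    have trD : Matrix.trace (Dᴴ * D) = 0 := by
      rw [hDH]
      nth_rewrite 2 [hDdef]
      rw [Matrix.mul_sub, Matrix.trace_sub, tr1, tr2, sub_self]
    have hD0 : D = 0 := trace_zero_of_psdish D trD
    rw [hDdef, sub_eq_zero] at hD0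
    have hc : Q = cm P := part2f hD0
    have := polar_comm hP hPA hQ hQA
    rwa [hc] at this
end

section
/- Let A be a nonsingular n×n complex matrix. Then the cosquare A⁻ᵀA is unitary if and only if A is conjugate normal, i.e., A*A = conj(AA*). -/
open Matrix

/-- For nonsingular `A`, the cosquare `A⁻ᵀ·A` is unitary iff `A` is conjugate normal,
i.e. `A*A = conj(AA*)`. -/
theorem stmt_12 {n : ℕ} (A : Matrix (Fin n) (Fin n) ℂ) (hA : IsUnit A.det) :
    (((A⁻¹)ᵀ * A)ᴴ * ((A⁻¹)ᵀ * A) = 1) ↔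
      Aᴴ * A = (A * Aᴴ).map (starRingEnd ℂ) := by
  set c := starRingEnd ℂ with hc
  have h1 : A⁻¹ * A = 1 := nonsing_inv_mul A hA
  have h2 : A * A⁻¹ = 1 := mul_nonsing_inv A hA
  have hcc : ∀ M : Matrix (Fin n) (Fin n) ℂ, (M.map c).map c = M := by
    intro M; ext i j; simp [hc, Matrix.map_apply]
  have hmm : ∀ M N : Matrix (Fin n) (Fin n) ℂ, (M * N).map c = M.map c * N.map c := by
    intro M N; exact Matrix.map_mul
  have hone : (1 : Matrix (Fin n) (Fin n) ℂ).map c = 1 :=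
    Matrix.map_one c (map_zero c) (map_one c)
  have hct : ((A⁻¹)ᵀ)ᴴ = (A⁻¹).map c := by
    ext i j; simp [hc, Matrix.conjTranspose_apply, Matrix.transpose_apply, Matrix.map_apply]
  have hAHc : Aᴴ.map c = Aᵀ := by
    ext i j; simp [hc, Matrix.conjTranspose_apply, Matrix.transpose_apply, Matrix.map_apply]
  have hATc : Aᵀ.map c = Aᴴ := by
    ext i j; simp [hc, Matrix.conjTranspose_apply, Matrix.transpose_apply, Matrix.map_apply]
  have hinvc : (A⁻¹).map c * A.map c = 1 := by rw [← hmm, h1, hone]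
  have hinvc' : A.map c * (A⁻¹).map c = 1 := by rw [← hmm, h2, hone]
  rw [conjTranspose_mul, hct]
  have hN : ((A⁻¹)ᵀ * A) * (A⁻¹ * Aᵀ) = 1 := by
    rw [mul_assoc, ← mul_assoc A, h2, one_mul, ← transpose_mul, h2, transpose_one]
  have hN' : (A⁻¹ * Aᵀ) * ((A⁻¹)ᵀ * A) = 1 := mul_eq_one_comm.mp hN
  constructor
  · intro h
    have hM : Aᴴ * (A⁻¹).map c = A⁻¹ * Aᵀ := by
      calc Aᴴ * (A⁻¹).map c = (Aᴴ * (A⁻¹).map c) * (((A⁻¹)ᵀ * A) * (A⁻¹ * Aᵀ)) := by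
            rw [hN, mul_one]
        _ = ((Aᴴ * (A⁻¹).map c) * ((A⁻¹)ᵀ * A)) * (A⁻¹ * Aᵀ) := by
            noncomm_ring
        _ = A⁻¹ * Aᵀ := by rw [h, one_mul]
    have key : A * Aᴴ = Aᵀ * A.map c := by
      calc A * Aᴴ = A * Aᴴ * ((A⁻¹).map c * A.map c) := by rw [hinvc, mul_one]
        _ = A * (Aᴴ * (A⁻¹).map c) * A.map c := by noncomm_ring
        _ = A * (A⁻¹ * Aᵀ) * A.map c := by rw [hM]
        _ = (A * A⁻¹) * Aᵀ * A.map c := by noncomm_ring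
        _ = Aᵀ * A.map c := by rw [h2, one_mul]
    rw [key, hmm, hATc, hcc]
  · intro h
    have key : A * Aᴴ = Aᵀ * A.map c := by
      have := congrArg (fun M => M.map c) h
      simp only [hmm, hAHc, hcc] at this
      exact this.symm
    have hM : Aᴴ * (A⁻¹).map c = A⁻¹ * Aᵀ := by
      calc Aᴴ * (A⁻¹).map c = A⁻¹ * (A * Aᴴ) * (A⁻¹).map c := by
            rw [← mul_assoc A⁻¹ A Aᴴ, h1, one_mul]
        _ = A⁻¹ * (Aᵀ * A.map c) * (A⁻¹).map c := by rw [key]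
        _ = A⁻¹ * Aᵀ * (A.map c * (A⁻¹).map c) := by noncomm_ring
        _ = A⁻¹ * Aᵀ := by rw [hinvc', mul_one]
    rw [hM]; exact hN'
end

section
/- Let A be an n×n complex matrix. Let P = (AA*)^{1/2} and Q = (A*A)^{1/2} be the unique positive semidefinite Hermitian square roots of AA* and A*A, and let S = (A + Aᵀ)/2 and C = (A − Aᵀ)/2. The following are equivalent: (a) conj(S)·S + conj(C)·C commutes with conj(S)·C + conj(C)·S; (b) A is congruence normal, i.e., conj(A)·A is normal; (c) A·conj(P) = conj(Q)·A. -/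
open Matrix
open scoped ComplexOrder

namespace Stmt13Aux

open Polynomial in
lemma aeval_intertwine {R M : Type*} [CommSemiring R] [Semiring M] [Algebra R M]
    (a b X : M) (h : b * X = X * a) (p : R[X]) : aeval b p * X = X * aeval a p := by
  have hpow : ∀ k : ℕ, b ^ k * X = X * a ^ k := by
    intro k
    induction k with
    | zero => simp
    | succ m ih => rw [pow_succ, pow_succ, mul_assoc, h, ← mul_assoc, ih, mul_assoc]
  induction p using Polynomial.induction_on' with
  | add p q hp hq => simp only [map_add, add_mul, mul_add, hp, hq]
  | monomial k c =>
      rw [aeval_monomial, aeval_monomial, mul_assoc, hpow, ← mul_assoc, Algebra.commutes,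
        mul_assoc]

variable {n : ℕ}

open Polynomial in
lemma psd_eq_aeval {R : Matrix (Fin n) (Fin n) ℂ} (hR : R.PosSemidef) (p : ℝ[X])
    (hp : ∀ x ∈ spectrum ℝ (R * R), p.eval x = Real.sqrt x) :
    aeval (R * R) p = R := by
  have hRR : (R * R).PosSemidef := by
    have h := Matrix.posSemidef_self_mul_conjTranspose R
    rwa [hR.1] at h
  have hsa : IsSelfAdjoint (R * R) := hRR.1
  calc aeval (R * R) p = cfc (fun x : ℝ => p.eval x) (R * R) := (cfc_polynomial p (R*R) hsa).symm
    _ = cfc Real.sqrt (R * R) := cfc_congr fun x hx => hp x hx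
    _ = hRR.1.cfc Real.sqrt := hRR.1.cfc_eq Real.sqrt
    _ = R := by
      open scoped MatrixOrder in
      rw [← hRR.1.cfc_eq, ← cfcₙ_eq_cfc, ← CFC.sqrt_eq_real_sqrt (R * R) hRR.nonneg, CFC.sqrt_mul_self R hR.nonneg]

open Polynomial in
lemma sqrt_intertwine {P Q X : Matrix (Fin n) (Fin n) ℂ} (hP : P.PosSemidef) (hQ : Q.PosSemidef)
    (h : P * P * X = X * (Q * Q)) : P * X = X * Q := by
  classical
  set s : Finset ℝ := (Matrix.finite_real_spectrum (A := P * P)).toFinset ∪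
    (Matrix.finite_real_spectrum (A := Q * Q)).toFinset with hs
  set p : ℝ[X] := Lagrange.interpolate s id Real.sqrt with hpdef
  have hnode : ∀ x ∈ s, p.eval x = Real.sqrt x := fun x hx =>
    Lagrange.eval_interpolate_at_node Real.sqrt Function.injective_id.injOn hx
  have h1 : aeval (P * P) p = P := psd_eq_aeval hP p (fun x hx => hnode x
    (Finset.mem_union_left _ ((Set.Finite.mem_toFinset _).2 hx)))
  have h2 : aeval (Q * Q) p = Q := psd_eq_aeval hQ p (fun x hx => hnode x
    (Finset.mem_union_right _ ((Set.Finite.mem_toFinset _).2 hx)))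
  calc P * X = aeval (P * P) p * X := by rw [h1]
    _ = X * aeval (Q * Q) p := aeval_intertwine _ _ _ h p
    _ = X * Q := by rw [h2]

section FP
open scoped Matrix.Norms.L2Operator

noncomputable instance : CStarAlgebra (Matrix (Fin n) (Fin n) ℂ) where

open Polynomial in
lemma fuglede_putnam {a b X : Matrix (Fin n) (Fin n) ℂ}
    (ha : IsStarNormal a) (hb : IsStarNormal b)
    (h : b * X = X * a) : star b * X = X * star a := by
  classical
  set s : Finset ℂ := (Matrix.finite_spectrum a).toFinset ∪
    (Matrix.finite_spectrum b).toFinset with hs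
  set p : ℂ[X] := Lagrange.interpolate s id (fun z => star z) with hpdef
  have hnode : ∀ x ∈ s, p.eval x = star x := fun x hx =>
    Lagrange.eval_interpolate_at_node _ Function.injective_id.injOn hx
  have key : ∀ (m : Matrix (Fin n) (Fin n) ℂ), IsStarNormal m →
      (∀ z ∈ spectrum ℂ m, z ∈ s) → star m = aeval m p := by
    intro m hm hsub
    calc star m = cfc (fun z : ℂ => star z) m := (cfc_star_id m).symm
      _ = cfc (fun z : ℂ => p.eval z) m := cfc_congr (fun z hz => (hnode z (hsub z hz)).symm)
      _ = aeval m p := cfc_polynomial p m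
  rw [key a ha (fun z hz => Finset.mem_union_left _ ((Set.Finite.mem_toFinset _).2 hz)),
    key b hb (fun z hz => Finset.mem_union_right _ ((Set.Finite.mem_toFinset _).2 hz))]
  exact aeval_intertwine _ _ _ h p

end FP

-- entrywise-conjugation helpers
lemma mapc_mapc (M : Matrix (Fin n) (Fin n) ℂ) :
    (M.map (starRingEnd ℂ)).map (starRingEnd ℂ) = M := by
  ext i j; simp [Matrix.map_apply]

lemma mapc_transpose (M : Matrix (Fin n) (Fin n) ℂ) :
    (M.map (starRingEnd ℂ))ᵀ = Mᴴ := by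
  ext i j; simp [Matrix.map_apply, conjTranspose_apply]

lemma mapc_conjT (M : Matrix (Fin n) (Fin n) ℂ) :
    (M.map (starRingEnd ℂ))ᴴ = Mᵀ := by
  ext i j; simp [Matrix.map_apply, conjTranspose_apply]

lemma conjT_mapc (M : Matrix (Fin n) (Fin n) ℂ) :
    (Mᴴ).map (starRingEnd ℂ) = Mᵀ := by
  ext i j; simp [Matrix.map_apply, conjTranspose_apply]

lemma transpose_mapc (M : Matrix (Fin n) (Fin n) ℂ) :
    (Mᵀ).map (starRingEnd ℂ) = Mᴴ := by
  ext i j; simp [Matrix.map_apply, conjTranspose_apply]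

lemma half_commute_iff {B T : Matrix (Fin n) (Fin n) ℂ} :
    ((2:ℂ)⁻¹ • (B + T)) * ((2:ℂ)⁻¹ • (B - T)) =
      ((2:ℂ)⁻¹ • (B - T)) * ((2:ℂ)⁻¹ • (B + T)) ↔ T * B = B * T := by
  have key : ((2:ℂ)⁻¹ • (B + T)) * ((2:ℂ)⁻¹ • (B - T)) -
      ((2:ℂ)⁻¹ • (B - T)) * ((2:ℂ)⁻¹ • (B + T)) = (2:ℂ)⁻¹ • (T * B - B * T) := by
    simp only [smul_mul_assoc, mul_smul_comm, smul_smul, add_mul, mul_add, sub_mul, mul_sub,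
      smul_add, smul_sub]
    module
  constructor
  · intro h
    have h0 : (2:ℂ)⁻¹ • (T * B - B * T) = 0 := by rw [← key, h, sub_self]
    rcases smul_eq_zero.mp h0 with h' | h'
    · norm_num at h'
    · exact sub_eq_zero.mp h'
  · intro h
    have h0 : (2:ℂ)⁻¹ • (T * B - B * T) = 0 := by rw [h, sub_self, smul_zero]
    exact sub_eq_zero.mp (key.trans h0)

end Stmt13Aux

open Stmt13Aux

/-- Characterizations of congruence normal matrices: with `P = (AA*)^{1/2}`,
`Q = (A*A)^{1/2}`, `S = (A + Aᵀ)/2`, `C = (A − Aᵀ)/2`, the following are equivalent: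
(a) `conj(S)S + conj(C)C` commutes with `conj(S)C + conj(C)S`;
(b) `conj(A)·A` is normal; (c) `A·conj(P) = conj(Q)·A`. -/
theorem stmt_13 {n : ℕ} (A P Q S C : Matrix (Fin n) (Fin n) ℂ)
    (hP : P.PosSemidef) (hPA : P * P = A * Aᴴ)
    (hQ : Q.PosSemidef) (hQA : Q * Q = Aᴴ * A)
    (hS : S = (2 : ℂ)⁻¹ • (A + Aᵀ)) (hC : C = (2 : ℂ)⁻¹ • (A - Aᵀ)) :
    (((S.map (starRingEnd ℂ) * S + C.map (starRingEnd ℂ) * C) *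
        (S.map (starRingEnd ℂ) * C + C.map (starRingEnd ℂ) * S) =
      (S.map (starRingEnd ℂ) * C + C.map (starRingEnd ℂ) * S) *
        (S.map (starRingEnd ℂ) * S + C.map (starRingEnd ℂ) * C)) ↔
      ((A.map (starRingEnd ℂ) * A)ᴴ * (A.map (starRingEnd ℂ) * A) =
        (A.map (starRingEnd ℂ) * A) * (A.map (starRingEnd ℂ) * A)ᴴ)) ∧
    (((A.map (starRingEnd ℂ) * A)ᴴ * (A.map (starRingEnd ℂ) * A) =
        (A.map (starRingEnd ℂ) * A) * (A.map (starRingEnd ℂ) * A)ᴴ) ↔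
      A * P.map (starRingEnd ℂ) = Q.map (starRingEnd ℂ) * A) := by
  subst hS hC
  have hBH : (A.map (starRingEnd ℂ) * A)ᴴ = Aᴴ * Aᵀ := by
    rw [conjTranspose_mul, mapc_conjT]
  have hPmap : P.map (starRingEnd ℂ) = Pᵀ := by
    calc P.map (starRingEnd ℂ) = (Pᴴ).map (starRingEnd ℂ) := by rw [hP.1]
      _ = Pᵀ := conjT_mapc P
  have hQmap : Q.map (starRingEnd ℂ) = Qᵀ := by
    calc Q.map (starRingEnd ℂ) = (Qᴴ).map (starRingEnd ℂ) := by rw [hQ.1]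
      _ = Qᵀ := conjT_mapc Q
  rw [hBH, hPmap, hQmap]
  have hmapS : ((2 : ℂ)⁻¹ • (A + Aᵀ)).map (starRingEnd ℂ) =
      (2 : ℂ)⁻¹ • (A.map (starRingEnd ℂ) + (A.map (starRingEnd ℂ))ᵀ) := by
    ext i j
    simp only [Matrix.map_apply, Matrix.smul_apply, Matrix.add_apply, Matrix.transpose_apply,
      smul_eq_mul, _root_.map_mul, _root_.map_add, map_inv₀, map_ofNat]
  have hmapC : ((2 : ℂ)⁻¹ • (A - Aᵀ)).map (starRingEnd ℂ) =
      (2 : ℂ)⁻¹ • (A.map (starRingEnd ℂ) - (A.map (starRingEnd ℂ))ᵀ) := by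
    ext i j
    simp only [Matrix.map_apply, Matrix.smul_apply, Matrix.sub_apply, Matrix.transpose_apply,
      smul_eq_mul, _root_.map_mul, _root_.map_sub, map_inv₀, map_ofNat]
  have hX : ((2 : ℂ)⁻¹ • (A + Aᵀ)).map (starRingEnd ℂ) * ((2 : ℂ)⁻¹ • (A + Aᵀ)) +
      ((2 : ℂ)⁻¹ • (A - Aᵀ)).map (starRingEnd ℂ) * ((2 : ℂ)⁻¹ • (A - Aᵀ)) =
      (2:ℂ)⁻¹ • (A.map (starRingEnd ℂ) * A + (A.map (starRingEnd ℂ))ᵀ * Aᵀ) := by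
    rw [hmapS, hmapC]
    simp only [smul_mul_assoc, mul_smul_comm, smul_smul, add_mul, mul_add, sub_mul, mul_sub,
      smul_add, smul_sub]
    module
  have hY : ((2 : ℂ)⁻¹ • (A + Aᵀ)).map (starRingEnd ℂ) * ((2 : ℂ)⁻¹ • (A - Aᵀ)) +
      ((2 : ℂ)⁻¹ • (A - Aᵀ)).map (starRingEnd ℂ) * ((2 : ℂ)⁻¹ • (A + Aᵀ)) =
      (2:ℂ)⁻¹ • (A.map (starRingEnd ℂ) * A - (A.map (starRingEnd ℂ))ᵀ * Aᵀ) := by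
    rw [hmapS, hmapC]
    simp only [smul_mul_assoc, mul_smul_comm, smul_smul, add_mul, mul_add, sub_mul, mul_sub,
      smul_add, smul_sub]
    module
  rw [hX, hY, mapc_transpose]
  constructor
  · -- part (a) ↔ (b)
    exact half_commute_iff
  · -- part (b) ↔ (c)
    constructor
    · -- (b) → (c)
      intro hb
      have hBn : IsStarNormal (A.map (starRingEnd ℂ) * A) := by
        constructor
        show _ * _ = _ * _
        rw [Matrix.star_eq_conjTranspose, hBH]
        exact hb
      have hconj := congrArg (fun M : Matrix (Fin n) (Fin n) ℂ => M.map (starRingEnd ℂ)) hb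
      simp only [Matrix.map_mul, conjT_mapc, transpose_mapc, mapc_mapc] at hconj
      -- hconj : Aᵀ * Aᴴ * (A * A.map c) = (A * A.map c) * (Aᵀ * Aᴴ)
      have hDn : IsStarNormal (A * A.map (starRingEnd ℂ)) := by
        constructor
        show _ * _ = _ * _
        rw [Matrix.star_eq_conjTranspose, conjTranspose_mul, mapc_conjT]
        exact hconj
      have hfp := fuglede_putnam hBn hDn (mul_assoc A (A.map (starRingEnd ℂ)) A)
      rw [Matrix.star_eq_conjTranspose, Matrix.star_eq_conjTranspose, conjTranspose_mul,
        conjTranspose_mul, mapc_conjT] at hfp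
      -- hfp : Aᵀ * Aᴴ * A = A * (Aᴴ * Aᵀ)
      have hsq : P * P * Aᵀ = Aᵀ * (Q * Q) := by
        rw [hPA, hQA]
        simp only [mul_assoc] at hfp ⊢
        exact hfp.symm
      have h5 := congrArg Matrix.transpose (sqrt_intertwine hP hQ hsq)
      simpa only [transpose_mul, transpose_transpose] using h5
    · -- (c) → (b)
      intro hc
      have h0 : P * Aᵀ = Aᵀ * Q := by
        have := congrArg Matrix.transpose hc
        simpa only [transpose_mul, transpose_transpose] using this
      have hE : A * Aᴴ * Aᵀ = Aᵀ * (Aᴴ * A) := by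
        rw [← hPA, ← hQA]
        calc P * P * Aᵀ = P * (P * Aᵀ) := mul_assoc _ _ _
          _ = P * (Aᵀ * Q) := by rw [h0]
          _ = (P * Aᵀ) * Q := (mul_assoc _ _ _).symm
          _ = (Aᵀ * Q) * Q := by rw [h0]
          _ = Aᵀ * (Q * Q) := mul_assoc _ _ _
      have hEc := congrArg (fun M : Matrix (Fin n) (Fin n) ℂ => M.map (starRingEnd ℂ)) hE
      simp only [Matrix.map_mul, conjT_mapc, transpose_mapc, mapc_mapc] at hEc
      -- hEc : A.map c * Aᵀ * Aᴴ = Aᴴ * (Aᵀ * A.map c)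
      have hEc' := congrArg (fun M : Matrix (Fin n) (Fin n) ℂ => M * A) hEc
      simp only [mul_assoc] at hEc' hE ⊢
      rw [hE, ← hEc']
end
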